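/- If C is a non-degenerate linear [n,2,d]_q code with Singleton defect s > 0, then the dual code C^⊥ is an AMDS code, i.e., has Singleton defect exactly 1. -/

import Mathlib

/-- `C` is a linear `[n,k,d]_q` code: a `k`-dimensional subspace of `F^n`
with minimum Hamming distance `d`. -/
def IsLinearCode (F : Type*) [Field F] [DecidableEq F] (n k d : ℕ)
    (C : Submodule F (Fin n → F)) : Prop :=
  Module.finrank F ↥C = k ∧ 0 < d ∧
  (∀ x ∈ C, x ≠ 0 → d ≤ hammingNorm x) ∧ (∃ x ∈ C, x ≠ 0 ∧ hammingNorm x = d)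

/-- The dual code `C^⊥ = {y : y ⬝ x = 0 for all x ∈ C}`. -/
def dualCode {F : Type*} [Field F] {n : ℕ} (C : Submodule F (Fin n → F)) :
    Submodule F (Fin n → F) where
  carrier := {y | ∀ x ∈ C, ∑ i, y i * x i = 0}
  add_mem' := by
    intro a b ha hb x hx
    have h1 := ha x hx
    have h2 := hb x hx
    simp only [Pi.add_apply, add_mul, Finset.sum_add_distrib, h1, h2, add_zero]
  zero_mem' := by
    intro x hx
    simp
  smul_mem' := by
    intro c a ha x hx
    have h := ha x hx
    simp only [Pi.smul_apply, smul_eq_mul, mul_assoc, ← Finset.mul_sum, h, mul_zero]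

/-- The standard dot-product bilinear form on `Fin n → F`. -/
def dotB (F : Type*) [Field F] (n : ℕ) : LinearMap.BilinForm F (Fin n → F) :=
  LinearMap.mk₂ F (fun x y => ∑ i, x i * y i)
    (by intros; simp [add_mul, Finset.sum_add_distrib])
    (by intros; simp [Finset.mul_sum, mul_assoc])
    (by intros; simp [mul_add, Finset.sum_add_distrib])
    (by intros; simp [Finset.mul_sum]; ring_nf; simp [mul_assoc, mul_comm, mul_left_comm])

lemma dotB_apply {F : Type*} [Field F] {n : ℕ} (x y : Fin n → F) :
    dotB F n x y = ∑ i, x i * y i := rfl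

lemma dotB_isRefl (F : Type*) [Field F] (n : ℕ) : (dotB F n).IsRefl := by
  intro x y h
  simpa [dotB_apply, mul_comm] using h

lemma dotB_nondeg (F : Type*) [Field F] [DecidableEq F] (n : ℕ) :
    (dotB F n).Nondegenerate := by
  refine (dotB_isRefl F n).nondegenerate_iff_separatingLeft.mpr ?_
  intro x hx
  funext j
  have := hx (Pi.single j 1)
  classical
  rw [dotB_apply] at this
  simpa [Pi.single_apply, mul_ite, Finset.sum_ite_eq'] using this

lemma dualCode_eq_orthogonal {F : Type*} [Field F] {n : ℕ} (C : Submodule F (Fin n → F)) :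
    dualCode C = (dotB F n).orthogonal C := by
  ext y
  constructor
  · intro hy c hc
    have := hy c hc
    simpa [LinearMap.BilinForm.IsOrtho, dotB_apply, mul_comm] using this
  · intro hy c hc
    have := hy c hc
    simpa [LinearMap.BilinForm.IsOrtho, dotB_apply, mul_comm] using this

theorem dual_of_two_dim_is_AMDS (F : Type*) [Field F] [Fintype F] [DecidableEq F]
    (n d s : ℕ) (C : Submodule F (Fin n → F))
    (hC : IsLinearCode F n 2 d C)
    (hnd : ∀ i : Fin n, ∃ x ∈ C, x i ≠ 0)
    (hs : d + 2 + s = n + 1) (hspos : 0 < s) :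
    IsLinearCode F n (n - 2) 2 (dualCode C) := by
  classical
  obtain ⟨hrank, hdpos, hmin, x, hxC, hx0, hxw⟩ := hC
  -- lower bound: every nonzero dual word has weight ≥ 2
  have hlow : ∀ y ∈ dualCode C, y ≠ 0 → 2 ≤ hammingNorm y := by
    intro y hy hy0
    obtain ⟨i, hi⟩ : ∃ i, y i ≠ 0 := by
      by_contra h
      push_neg at h
      exact hy0 (funext h)
    obtain ⟨c, hcC, hci⟩ := hnd i
    have hsum : ∑ k, y k * c k = 0 := hy c hcC
    have hterm : y i * c i ≠ 0 := mul_ne_zero hi hci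
    obtain ⟨j, hji, hj⟩ : ∃ j, j ≠ i ∧ y j * c j ≠ 0 := by
      by_contra h
      push_neg at h
      have : ∑ k, y k * c k = y i * c i := by
        apply Finset.sum_eq_single
        · intro b _ hb
          by_contra hb'
          exact hb' (h b hb)
        · intro hb; exact absurd (Finset.mem_univ i) hb
      rw [hsum] at this
      exact hterm this.symm
    have hyj : y j ≠ 0 := fun h => hj (by simp [h])
    have : 1 < (Finset.univ.filter (fun k => y k ≠ 0)).card := by
      rw [Finset.one_lt_card]
      exact ⟨j, by simp [hyj], i, by simp [hi], hji⟩
    exact this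
  -- finrank of the dual
  have hfr : Module.finrank F ↥(dualCode C) = n - 2 := by
    rw [dualCode_eq_orthogonal]
    rw [LinearMap.BilinForm.finrank_orthogonal (dotB_nondeg F n) C]
    rw [hrank, Module.finrank_pi]
    simp
  -- d ≤ n - 2
  have hdn : d + 2 ≤ n := by omega
  -- get a codeword with two zero coordinates
  have hcard : 2 ≤ (Finset.univ.filter (fun k => x k = 0)).card := by
    have h1 : (Finset.univ.filter (fun k => ¬ x k = 0)).card = d := by
      simpa [hammingNorm] using hxw
    have h2 := Finset.card_filter_add_card_filter_not
      (s := (Finset.univ : Finset (Fin n))) (p := fun k => x k = 0)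
    simp only [Finset.card_univ, Fintype.card_fin] at h2
    omega
  obtain ⟨i, hi, j, hj, hij⟩ := Finset.one_lt_card.mp hcard
  simp only [Finset.mem_filter, Finset.mem_univ, true_and] at hi hj
  -- x i = 0 and x j = 0, i ≠ j
  obtain ⟨x₀, hx₀C, hx₀i⟩ := hnd i
  -- the functional c ↦ c i on C
  set ψ : ↥C →ₗ[F] F := (LinearMap.proj i).comp C.subtype with hψ
  have hψx₀ : ψ ⟨x₀, hx₀C⟩ = x₀ i := rfl
  have hkerlt : LinearMap.ker ψ < ⊤ := by
    rw [lt_top_iff_ne_top]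
    intro h
    have : (⟨x₀, hx₀C⟩ : ↥C) ∈ LinearMap.ker ψ := h ▸ Submodule.mem_top
    exact hx₀i (by simpa [hψx₀] using this)
  have hfinC : FiniteDimensional F ↥C := by
    have : Module.finrank F ↥C = 2 := hrank
    exact FiniteDimensional.of_finrank_pos (by omega)
  have hkerfr : Module.finrank F ↥(LinearMap.ker ψ) < 2 := by
    have := Submodule.finrank_lt (lt_top_iff_ne_top.mp hkerlt)
    omega
  have hxmem : (⟨x, hxC⟩ : ↥C) ∈ LinearMap.ker ψ := by
    simp [hψ, LinearMap.mem_ker]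
    exact hi
  have hxne : (⟨x, hxC⟩ : ↥C) ≠ 0 := by
    intro h
    exact hx0 (by simpa using congrArg Subtype.val h)
  have hspan : (F ∙ (⟨x, hxC⟩ : ↥C)) = LinearMap.ker ψ := by
    apply Submodule.eq_of_le_of_finrank_le
    · exact (Submodule.span_singleton_le_iff_mem _ _).mpr hxmem
    · rw [finrank_span_singleton hxne]
      omega
  -- the key relation
  have hrel : ∀ c ∈ C, x₀ i * c j = c i * x₀ j := by
    intro c hcC
    set c' : Fin n → F := x₀ i • c - c i • x₀ with hc'
    have hc'C : c' ∈ C := Submodule.sub_mem _ (Submodule.smul_mem _ _ hcC)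
      (Submodule.smul_mem _ _ hx₀C)
    have hc'i : c' i = 0 := by simp [hc']; ring
    have hc'ker : (⟨c', hc'C⟩ : ↥C) ∈ LinearMap.ker ψ := by
      simp [hψ, LinearMap.mem_ker]; exact hc'i
    rw [← hspan] at hc'ker
    obtain ⟨t, ht⟩ := Submodule.mem_span_singleton.mp hc'ker
    have htv : c' = t • x := by
      have := congrArg Subtype.val ht
      simpa using this.symm
    have : c' j = 0 := by rw [htv]; simp [hj]
    have hc'j : c' j = x₀ i * c j - c i * x₀ j := by simp [hc']
    rw [hc'j] at this
    exact sub_eq_zero.mp this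
  -- construct weight-2 dual word
  set y : Fin n → F := Pi.single i (-x₀ j) + Pi.single j (x₀ i) with hy
  have hyj : y j = x₀ i := by
    simp [hy, Pi.single_apply, hij.symm]
  have hydual : y ∈ dualCode C := by
    intro c hcC
    have h1 : ∑ k, (Pi.single i (-x₀ j) : Fin n → F) k * c k = -x₀ j * c i := by
      have e : ∀ k, (Pi.single i (-x₀ j) : Fin n → F) k * c k
          = (Pi.single i (-x₀ j * c i) : Fin n → F) k := by
        intro k
        by_cases hk : k = i
        · subst hk; simp
        · simp [Pi.single_apply, hk]
      rw [Finset.sum_congr rfl (fun k _ => e k)]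
      simp [Finset.sum_pi_single']
    have h2 : ∑ k, (Pi.single j (x₀ i) : Fin n → F) k * c k = x₀ i * c j := by
      have e : ∀ k, (Pi.single j (x₀ i) : Fin n → F) k * c k
          = (Pi.single j (x₀ i * c j) : Fin n → F) k := by
        intro k
        by_cases hk : k = j
        · subst hk; simp
        · simp [Pi.single_apply, hk]
      rw [Finset.sum_congr rfl (fun k _ => e k)]
      simp [Finset.sum_pi_single']
    have : ∑ k, y k * c k = -x₀ j * c i + x₀ i * c j := by
      simp only [hy, Pi.add_apply, add_mul, Finset.sum_add_distrib, h1, h2]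
    rw [this, hrel c hcC]
    ring
  have hyne : y ≠ 0 := by
    intro h
    have : y j = 0 := by rw [h]; rfl
    rw [hyj] at this
    exact hx₀i this
  have hynorm : hammingNorm y = 2 := by
    refine le_antisymm ?_ (hlow y hydual hyne)
    -- support of y ⊆ {i, j}
    have : (Finset.univ.filter (fun k => y k ≠ 0)) ⊆ {i, j} := by
      intro k hk
      simp only [Finset.mem_filter] at hk
      by_contra hk'
      simp only [Finset.mem_insert, Finset.mem_singleton] at hk'
      push_neg at hk'
      apply hk.2
      simp [hy, Pi.single_apply, hk'.1, hk'.2]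
    calc hammingNorm y ≤ ({i, j} : Finset (Fin n)).card := Finset.card_le_card this
      _ ≤ 2 := Finset.card_insert_le _ _ |>.trans (by simp)
  exact ⟨hfr, by norm_num, hlow, y, hydual, hyne, hynorm⟩
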